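/- arXiv:2508.10766 — 2 statements merged into one kernel-verified Lean document; each statement's English description precedes it below -/
import Mathlib

section
/- Define f : ℝ² → ℝ² by f(x₁, x₂) = ((x₁² − x₂²)/(x₁² + x₂²), 2x₁x₂/(x₁² + x₂²)) for (x₁, x₂) ≠ (0,0), and f(0,0) = (0,0). Then for every z̄ ≠ (0,0), the covering constant of f at (z̄, f(z̄)) equals 0; that is, sup_{η>0} inf { ‖(∇f(z))* y‖ : z ∈ ℝ² \ {0}, ‖z − z̄‖ ≤ η, ‖f(z) − f(z̄)‖ ≤ η, ‖y‖ = 1 } = 0. -/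
open Classical in
/-- The rational mapping 4.1:
`f(x₁,x₂) = ((x₁² − x₂²)/(x₁² + x₂²), 2x₁x₂/(x₁² + x₂²))` for `x ≠ 0`, `f(0) = 0`. -/
noncomputable def ratMap (x : EuclideanSpace ℝ (Fin 2)) : EuclideanSpace ℝ (Fin 2) :=
  if x = 0 then 0 else
    WithLp.toLp 2 ![(x 0 ^ 2 - x 1 ^ 2) / (x 0 ^ 2 + x 1 ^ 2), 2 * x 0 * x 1 / (x 0 ^ 2 + x 1 ^ 2)]

/-- The covering constant `α̂(f, z̄, f(z̄))` of a map `f : ℝ² → ℝ²` (Fréchet differentiable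
on the set `S`) at `z̄`:
`sup_{η>0} inf { ‖(∇f(z))* y‖ : z ∈ S, ‖z − z̄‖ ≤ η, ‖f(z) − f(z̄)‖ ≤ η, ‖y‖ = 1 }`. -/
noncomputable def coveringConstant (f : EuclideanSpace ℝ (Fin 2) → EuclideanSpace ℝ (Fin 2))
    (S : Set (EuclideanSpace ℝ (Fin 2))) (zb : EuclideanSpace ℝ (Fin 2)) : ℝ :=
  sSup { a : ℝ | ∃ η : ℝ, 0 < η ∧
    a = sInf { r : ℝ | ∃ z ∈ S, ∃ y : EuclideanSpace ℝ (Fin 2),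
      ‖z - zb‖ ≤ η ∧ ‖f z - f zb‖ ≤ η ∧ ‖y‖ = 1 ∧
      r = ‖ContinuousLinearMap.adjoint (fderiv ℝ f z) y‖ } }

open RealInnerProductSpace in
lemma ratMap_inner_self (x : EuclideanSpace ℝ (Fin 2)) (hx : x ≠ 0) :
    ⟪ratMap x, ratMap x⟫ = 1 := by
  have h01 : x 0 ≠ 0 ∨ x 1 ≠ 0 := by
    by_contra h
    push_neg at h
    exact hx (by ext i; fin_cases i <;> simp [h.1, h.2])
  have hs : x 0 ^ 2 + x 1 ^ 2 ≠ 0 := by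
    rcases h01 with h | h <;> positivity
  simp only [ratMap, if_neg hx, PiLp.inner_apply, RCLike.inner_apply, conj_trivial,
    Fin.sum_univ_two, PiLp.toLp_apply, Matrix.cons_val_zero, Matrix.cons_val_one, Matrix.head_cons]
  field_simp
  ring

open RealInnerProductSpace in
lemma ratMap_adjoint_eq_zero (zb : EuclideanSpace ℝ (Fin 2)) (hzb : zb ≠ 0) :
    ContinuousLinearMap.adjoint (fderiv ℝ ratMap zb) (ratMap zb) = 0 := by
  by_cases hd : DifferentiableAt ℝ ratMap zb
  · have hev : (fun x => ⟪ratMap x, ratMap x⟫) =ᶠ[nhds zb] fun _ => (1 : ℝ) := by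
      filter_upwards [isOpen_compl_singleton.mem_nhds hzb] with x hx
      exact ratMap_inner_self x hx
    have hfd : fderiv ℝ (fun x => ⟪ratMap x, ratMap x⟫) zb = 0 := by
      rw [hev.fderiv_eq]
      exact fderiv_const_apply 1
    have hkey : ∀ h, ⟪ratMap zb, fderiv ℝ ratMap zb h⟫ = 0 := by
      intro h
      have h2 := fderiv_inner_apply (𝕜 := ℝ) hd hd h
      rw [hfd] at h2
      simp only [ContinuousLinearMap.zero_apply] at h2
      have hsymm : ⟪fderiv ℝ ratMap zb h, ratMap zb⟫ = ⟪ratMap zb, fderiv ℝ ratMap zb h⟫ :=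
        real_inner_comm _ _
      linarith [h2.symm, hsymm]
    have hz : ⟪ContinuousLinearMap.adjoint (fderiv ℝ ratMap zb) (ratMap zb),
        ContinuousLinearMap.adjoint (fderiv ℝ ratMap zb) (ratMap zb)⟫ = 0 := by
      rw [ContinuousLinearMap.adjoint_inner_left]
      exact hkey _
    exact inner_self_eq_zero.mp hz
  · rw [fderiv_zero_of_not_differentiableAt hd]
    simp

lemma ratMap_norm_one (zb : EuclideanSpace ℝ (Fin 2)) (hzb : zb ≠ 0) : ‖ratMap zb‖ = 1 := by
  have h := ratMap_inner_self zb hzb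
  rw [real_inner_self_eq_norm_sq] at h
  nlinarith [norm_nonneg (ratMap zb)]

/-- the covering constant of `ratMap` (with `S = ℝ² \ {0}`) at every
`z̄ ≠ 0` equals `0`. -/
theorem ratMap_coveringConstant_eq_zero (zb : EuclideanSpace ℝ (Fin 2)) (hzb : zb ≠ 0) :
    coveringConstant ratMap {(0 : EuclideanSpace ℝ (Fin 2))}ᶜ zb = 0 := by
  have hadj := ratMap_adjoint_eq_zero zb hzb
  have hn := ratMap_norm_one zb hzb
  have hmem : ∀ η : ℝ, 0 < η →
      (0 : ℝ) ∈ { r : ℝ | ∃ z ∈ ({(0 : EuclideanSpace ℝ (Fin 2))}ᶜ : Set _),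
        ∃ y : EuclideanSpace ℝ (Fin 2),
        ‖z - zb‖ ≤ η ∧ ‖ratMap z - ratMap zb‖ ≤ η ∧ ‖y‖ = 1 ∧
        r = ‖ContinuousLinearMap.adjoint (fderiv ℝ ratMap z) y‖ } := by
    intro η hη
    exact ⟨zb, hzb, ratMap zb, by simp [hη.le], by simp [hη.le], hn, by rw [hadj]; simp⟩
  have hinf : ∀ η : ℝ, 0 < η →
      sInf { r : ℝ | ∃ z ∈ ({(0 : EuclideanSpace ℝ (Fin 2))}ᶜ : Set _),
        ∃ y : EuclideanSpace ℝ (Fin 2),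
        ‖z - zb‖ ≤ η ∧ ‖ratMap z - ratMap zb‖ ≤ η ∧ ‖y‖ = 1 ∧
        r = ‖ContinuousLinearMap.adjoint (fderiv ℝ ratMap z) y‖ } = 0 := by
    intro η hη
    have hlb : ∀ r ∈ { r : ℝ | ∃ z ∈ ({(0 : EuclideanSpace ℝ (Fin 2))}ᶜ : Set _),
        ∃ y : EuclideanSpace ℝ (Fin 2),
        ‖z - zb‖ ≤ η ∧ ‖ratMap z - ratMap zb‖ ≤ η ∧ ‖y‖ = 1 ∧
        r = ‖ContinuousLinearMap.adjoint (fderiv ℝ ratMap z) y‖ }, (0 : ℝ) ≤ r := by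
      rintro r ⟨z, hz, y, _, _, _, rfl⟩
      positivity
    exact le_antisymm (csInf_le ⟨0, hlb⟩ (hmem η hη)) (le_csInf ⟨0, hmem η hη⟩ hlb)
  unfold coveringConstant
  have hset : { a : ℝ | ∃ η : ℝ, 0 < η ∧
      a = sInf { r : ℝ | ∃ z ∈ ({(0 : EuclideanSpace ℝ (Fin 2))}ᶜ : Set _),
        ∃ y : EuclideanSpace ℝ (Fin 2),
        ‖z - zb‖ ≤ η ∧ ‖ratMap z - ratMap zb‖ ≤ η ∧ ‖y‖ = 1 ∧
        r = ‖ContinuousLinearMap.adjoint (fderiv ℝ ratMap z) y‖ } } = {0} := by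
    ext a
    constructor
    · rintro ⟨η, hη, rfl⟩
      exact hinf η hη
    · rintro (rfl : a = 0)
      exact ⟨1, one_pos, (hinf 1 one_pos).symm⟩
  rw [hset, csSup_singleton]
end

section
/- Define f : ℝ² → ℝ² by f(x₁, x₂) = ((x₁² − x₂²)/(x₁² + x₂²), 2x₁x₂/(x₁² + x₂²)) for (x₁, x₂) ≠ (0,0), and f(0,0) = (0,0). Then for every y = (y₁, y₂) ≠ (0,0) and every x ∈ ℝ², one has limsup_{u → 0, u ≠ 0} (⟨x, u⟩ − ⟨y, f(u)⟩)/(‖u‖ + ‖f(u)‖) > 0. Consequently, the Mordukhovich coderivative set of f at the origin applied to y is empty for every y ≠ (0,0). -/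
set_option maxHeartbeats 1000000


open scoped RealInnerProductSpace

/-- for every `y ≠ 0` and every `x`, the limsup quotient defining the
Mordukhovich coderivative of `ratMap` at the origin is positive; consequently the
coderivative set of `ratMap` at the origin applied to `y` is empty for every `y ≠ 0`. -/
theorem ratMap_coderivative_empty_at_origin (y : EuclideanSpace ℝ (Fin 2)) (hy : y ≠ 0) :
    (∀ x : EuclideanSpace ℝ (Fin 2),
      0 < Filter.limsup
        (fun u => (⟪x, u⟫ - ⟪y, ratMap u⟫) / (‖u‖ + ‖ratMap u‖))
        (nhdsWithin 0 {(0 : EuclideanSpace ℝ (Fin 2))}ᶜ)) ∧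
    { x : EuclideanSpace ℝ (Fin 2) |
      Filter.limsup
        (fun u => (⟪x, u⟫ - ⟪y, ratMap u⟫) / (‖u‖ + ‖ratMap u‖))
        (nhdsWithin 0 {(0 : EuclideanSpace ℝ (Fin 2))}ᶜ) ≤ 0 } = ∅ := by
  classical
  have hn : (0:ℝ) < ‖y‖ := norm_pos_iff.mpr hy
  have hn' : ‖y‖ ≠ 0 := hn.ne'
  have hy2 : ‖y‖ ^ 2 = y 0 ^ 2 + y 1 ^ 2 := by
    have h := EuclideanSpace.norm_eq y
    rw [Fin.sum_univ_two] at h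
    rw [h, Real.sq_sqrt (by positivity)]
    simp [Real.norm_eq_abs, sq_abs]
  set c1 : ℝ := -(y 0) / ‖y‖ with hc1_def
  set c2 : ℝ := -(y 1) / ‖y‖ with hc2_def
  have hc : c1 ^ 2 + c2 ^ 2 = 1 := by
    rw [hc1_def, hc2_def]
    field_simp
    linarith [hy2]
  have hc1le : c1 ^ 2 ≤ 1 := by nlinarith [sq_nonneg c2]
  have h1 : (0:ℝ) ≤ (1 + c1) / 2 := by nlinarith
  have h2 : (0:ℝ) ≤ (1 - c1) / 2 := by nlinarith
  set s : ℝ := if 0 ≤ c2 then 1 else -1 with hs_def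
  have hs2 : s ^ 2 = 1 := by rw [hs_def]; split <;> norm_num
  have hsc : s * |c2| = c2 := by
    rw [hs_def]; split
    · rw [abs_of_nonneg (by assumption), one_mul]
    · rw [abs_of_neg (lt_of_not_ge (by assumption))]; ring
  set a : ℝ := Real.sqrt ((1 + c1) / 2) with ha_def
  set b : ℝ := s * Real.sqrt ((1 - c1) / 2) with hb_def
  have ha2 : a ^ 2 = (1 + c1) / 2 := Real.sq_sqrt h1
  have hb2 : b ^ 2 = (1 - c1) / 2 := by
    rw [hb_def, mul_pow, hs2, one_mul, Real.sq_sqrt h2]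
  have hab : a ^ 2 + b ^ 2 = 1 := by rw [ha2, hb2]; ring
  have hab1 : a ^ 2 - b ^ 2 = c1 := by rw [ha2, hb2]; ring
  have hprod : Real.sqrt ((1 + c1) / 2) * Real.sqrt ((1 - c1) / 2) = |c2| / 2 := by
    rw [← Real.sqrt_mul h1]
    rw [show (1 + c1) / 2 * ((1 - c1) / 2) = (|c2| / 2) ^ 2 by
      rw [div_pow, sq_abs]; nlinarith]
    exact Real.sqrt_sq (by positivity)
  have h2ab : 2 * a * b = c2 := by
    rw [ha_def, hb_def]
    calc 2 * Real.sqrt ((1 + c1) / 2) * (s * Real.sqrt ((1 - c1) / 2))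
        = s * (2 * (Real.sqrt ((1 + c1) / 2) * Real.sqrt ((1 - c1) / 2))) := by ring
      _ = s * (2 * (|c2| / 2)) := by rw [hprod]
      _ = s * |c2| := by ring
      _ = c2 := hsc
  -- the direction vector
  set w : EuclideanSpace ℝ (Fin 2) := (WithLp.equiv 2 (Fin 2 → ℝ)).symm ![a, b] with hw_def
  have hw0 : w 0 = a := rfl
  have hw1 : w 1 = b := rfl
  have hwnorm : ‖w‖ = 1 := by
    rw [EuclideanSpace.norm_eq, Fin.sum_univ_two, hw0, hw1]
    simp only [Real.norm_eq_abs, sq_abs]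
    rw [hab, Real.sqrt_one]
  have hwne : w ≠ 0 := by
    intro h
    rw [h, norm_zero] at hwnorm
    exact one_ne_zero hwnorm.symm
  -- key facts about points on the ray
  have hune : ∀ t : ℝ, t ≠ 0 → t • w ≠ 0 := fun t ht => smul_ne_zero ht hwne
  have hrm : ∀ t : ℝ, t ≠ 0 →
      ratMap (t • w) = (WithLp.equiv 2 (Fin 2 → ℝ)).symm ![c1, c2] := by
    intro t ht
    have ht2 : (t:ℝ) ^ 2 ≠ 0 := pow_ne_zero 2 ht
    rw [ratMap, if_neg (hune t ht)]
    have hs0 : (t • w) 0 = t * a := by rw [PiLp.smul_apply, hw0, smul_eq_mul]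
    have hs1 : (t • w) 1 = t * b := by rw [PiLp.smul_apply, hw1, smul_eq_mul]
    have hden : (t • w) 0 ^ 2 + (t • w) 1 ^ 2 = t ^ 2 := by
      rw [hs0, hs1]; nlinarith [hab]
    ext i
    fin_cases i
    · show ((t • w) 0 ^ 2 - (t • w) 1 ^ 2) / ((t • w) 0 ^ 2 + (t • w) 1 ^ 2) = c1
      rw [hden, hs0, hs1]
      rw [show (t * a) ^ 2 - (t * b) ^ 2 = t ^ 2 * c1 by nlinarith [hab1]]
      field_simp
    · show (2 * (t • w) 0 * (t • w) 1) / ((t • w) 0 ^ 2 + (t • w) 1 ^ 2) = c2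
      rw [hden, hs0, hs1]
      rw [show 2 * (t * a) * (t * b) = t ^ 2 * c2 by nlinarith [h2ab]]
      field_simp
  have hinner_y : ⟪y, (WithLp.equiv 2 (Fin 2 → ℝ)).symm ![c1, c2]⟫ = -‖y‖ := by
    simp only [PiLp.inner_apply, RCLike.inner_apply, conj_trivial, Fin.sum_univ_two]
    show c1 * y 0 + c2 * y 1 = -‖y‖
    rw [mul_comm c1, mul_comm c2]
    have hstep : y 0 * c1 + y 1 * c2 = -(y 0 ^ 2 + y 1 ^ 2) / ‖y‖ := by
      rw [hc1_def, hc2_def]; ring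
    rw [hstep, ← hy2, pow_two, ← neg_mul, mul_div_assoc, div_self hn', mul_one]
  have hnorm_c : ‖(WithLp.equiv 2 (Fin 2 → ℝ)).symm ![c1, c2]‖ = 1 := by
    rw [EuclideanSpace.norm_eq, Fin.sum_univ_two]
    show Real.sqrt (‖c1‖ ^ 2 + ‖c2‖ ^ 2) = 1
    simp only [Real.norm_eq_abs, sq_abs]
    rw [hc, Real.sqrt_one]
  -- main positivity statement
  have key : ∀ x : EuclideanSpace ℝ (Fin 2),
      0 < Filter.limsup
        (fun u => (⟪x, u⟫ - ⟪y, ratMap u⟫) / (‖u‖ + ‖ratMap u‖))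
        (nhdsWithin 0 {(0 : EuclideanSpace ℝ (Fin 2))}ᶜ) := by
    intro x
    set q : EuclideanSpace ℝ (Fin 2) → ℝ :=
      fun u => (⟪x, u⟫ - ⟪y, ratMap u⟫) / (‖u‖ + ‖ratMap u‖) with hq_def
    set k : ℝ := ⟪x, w⟫ with hk_def
    have hquot : ∀ t : ℝ, t ≠ 0 → q (t • w) = (t * k + ‖y‖) / (|t| + 1) := by
      intro t ht
      rw [hq_def]
      simp only
      rw [hrm t ht, hinner_y, hnorm_c, real_inner_smul_right, norm_smul, hwnorm,
        Real.norm_eq_abs, mul_one]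
      rw [← hk_def]
      ring_nf
    -- the auxiliary scalar function tends to ‖y‖
    have hg : Filter.Tendsto (fun t : ℝ => (t * k + ‖y‖) / (|t| + 1)) (nhds 0)
        (nhds ‖y‖) := by
      have h1 : Filter.Tendsto (fun t : ℝ => t * k + ‖y‖) (nhds 0) (nhds (0 * k + ‖y‖)) := by
        exact ((continuous_id.mul continuous_const).add continuous_const).continuousAt
      have h2 : Filter.Tendsto (fun t : ℝ => |t| + 1) (nhds 0) (nhds (|(0:ℝ)| + 1)) := by
        exact ((continuous_abs).add continuous_const).continuousAt
      have := h1.div h2 (by norm_num)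
      rw [show ((0:ℝ) * k + ‖y‖) / (|(0:ℝ)| + 1) = ‖y‖ by simp] at this
      exact this
    have hev : ∀ᶠ t in nhdsWithin (0:ℝ) {(0:ℝ)}ᶜ, ‖y‖ / 2 ≤ q (t • w) := by
      have hev1 : ∀ᶠ t in nhds (0:ℝ), ‖y‖ / 2 < (t * k + ‖y‖) / (|t| + 1) :=
        hg.eventually (eventually_gt_nhds (by linarith))
      have hev2 : ∀ᶠ t in nhdsWithin (0:ℝ) {(0:ℝ)}ᶜ, ‖y‖ / 2 < (t * k + ‖y‖) / (|t| + 1) :=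
        hev1.filter_mono nhdsWithin_le_nhds
      filter_upwards [hev2, self_mem_nhdsWithin] with t h1 h2
      rw [hquot t h2]
      exact le_of_lt h1
    have htend : Filter.Tendsto (fun t : ℝ => t • w) (nhdsWithin (0:ℝ) {(0:ℝ)}ᶜ)
        (nhdsWithin (0 : EuclideanSpace ℝ (Fin 2)) {(0 : EuclideanSpace ℝ (Fin 2))}ᶜ) := by
      rw [tendsto_nhdsWithin_iff]
      constructor
      · have : Filter.Tendsto (fun t : ℝ => t • w) (nhds 0) (nhds ((0:ℝ) • w)) :=
          (continuous_id.smul continuous_const).continuousAt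
        rw [zero_smul] at this
        exact this.mono_left nhdsWithin_le_nhds
      · filter_upwards [self_mem_nhdsWithin] with t ht
        exact hune t ht
    have hfreq : ∃ᶠ u in nhdsWithin (0 : EuclideanSpace ℝ (Fin 2))
        {(0 : EuclideanSpace ℝ (Fin 2))}ᶜ, ‖y‖ / 2 ≤ q u :=
      htend.frequently hev.frequently
    have hbdd : Filter.IsBoundedUnder (· ≤ ·)
        (nhdsWithin (0 : EuclideanSpace ℝ (Fin 2)) {(0 : EuclideanSpace ℝ (Fin 2))}ᶜ) q := by
      apply Filter.isBoundedUnder_of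
      refine ⟨‖x‖ + ‖y‖, fun u => ?_⟩
      rw [hq_def]
      simp only
      by_cases hu : u = 0
      · rw [hu]
        simp [ratMap]
        positivity
      · have hupos : (0:ℝ) < ‖u‖ := norm_pos_iff.mpr hu
        have hd : (0:ℝ) < ‖u‖ + ‖ratMap u‖ := by
          have := norm_nonneg (ratMap u); linarith
        rw [div_le_iff₀ hd]
        have i1 : ⟪x, u⟫ ≤ ‖x‖ * ‖u‖ := real_inner_le_norm x u
        have i2 : -⟪y, ratMap u⟫ ≤ ‖y‖ * ‖ratMap u‖ := by
          have := abs_real_inner_le_norm y (ratMap u)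
          have := neg_abs_le (⟪y, ratMap u⟫ : ℝ)
          linarith
        nlinarith [norm_nonneg x, norm_nonneg y, norm_nonneg u, norm_nonneg (ratMap u)]
    have hle : ‖y‖ / 2 ≤ Filter.limsup q
        (nhdsWithin (0 : EuclideanSpace ℝ (Fin 2)) {(0 : EuclideanSpace ℝ (Fin 2))}ᶜ) :=
      Filter.le_limsup_of_frequently_le hfreq hbdd
    calc (0:ℝ) < ‖y‖ / 2 := by linarith
      _ ≤ _ := hle
  refine ⟨key, ?_⟩
  ext x
  simp only [Set.mem_setOf_eq, Set.mem_empty_iff_false, iff_false, not_le]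
  exact key x
end
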